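/- Given a program P and its well-founded model W, the residual program R(P) — obtained from P by deleting every rule whose body is false w.r.t. W and removing from remaining rule bodies all literals true w.r.t. W — has exactly the same answer sets as P: AS(P) = AS(R(P)). -/

import Mathlib

inductive Lit (α : Type) where
  | pos (a : α) : Lit α
  | neg (a : α) : Lit α

def Lit.compl {α : Type} : Lit α → Lit α
  | .pos a => .neg a
  | .neg a => .pos a

structure Rule (α : Type) where
  head : α
  body : Set (Lit α)

def posBody {α : Type} (r : Rule α) : Set α := {a | Lit.pos a ∈ r.body}
def negBody {α : Type} (r : Rule α) : Set α := {a | Lit.neg a ∈ r.body}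

def modelsReduct {α : Type} (P : Set (Rule α)) (M M' : Set α) : Prop :=
  ∀ r ∈ P, (∀ a ∈ negBody r, a ∉ M) → posBody r ⊆ M' → r.head ∈ M'

def isAnswerSet {α : Type} (P : Set (Rule α)) (M : Set α) : Prop :=
  modelsReduct P M M ∧ ∀ M' ⊂ M, ¬ modelsReduct P M M'

def bodyFalse {α : Type} (I : Set (Lit α)) (B : Set (Lit α)) : Prop :=
  ∃ l ∈ B, l.compl ∈ I

def unfounded {α : Type} (P : Set (Rule α)) (I : Set (Lit α)) (U : Set α) : Prop :=
  ∀ r ∈ P, r.head ∈ U → bodyFalse I r.body ∨ ∃ a ∈ U, Lit.pos a ∈ r.body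

def TP {α : Type} (P : Set (Rule α)) (I : Set (Lit α)) : Set α :=
  {a | ∃ r ∈ P, r.head = a ∧ r.body ⊆ I}

def GUS {α : Type} (P : Set (Rule α)) (I : Set (Lit α)) : Set α :=
  ⋃₀ {U | unfounded P I U}

def WP {α : Type} (P : Set (Rule α)) (I : Set (Lit α)) : Set (Lit α) :=
  (Lit.pos '' TP P I) ∪ (Lit.neg '' GUS P I)

def isWFModel {α : Type} (P : Set (Rule α)) (W : Set (Lit α)) : Prop :=
  WP P W = W ∧ ∀ I, WP P I = I → W ⊆ I

def litsOf {α : Type} (M : Set α) : Set (Lit α) :=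
  (Lit.pos '' M) ∪ (Lit.neg '' Mᶜ)

def residualProg {α : Type} (P : Set (Rule α)) (W : Set (Lit α)) : Set (Rule α) :=
  {r' | ∃ r ∈ P, ¬ bodyFalse W r.body ∧ r' = ⟨r.head, {l | l ∈ r.body ∧ l ∉ W}⟩}

namespace ASRproof

variable {α : Type} {P : Set (Rule α)} {W : Set (Lit α)}

lemma compl_compl (l : Lit α) : l.compl.compl = l := by cases l <;> rfl

lemma mem_litsOf_pos {M : Set α} {a : α} : Lit.pos a ∈ litsOf M ↔ a ∈ M := by
  simp [litsOf]

lemma mem_litsOf_neg {M : Set α} {a : α} : Lit.neg a ∈ litsOf M ↔ a ∉ M := by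
  simp [litsOf]

lemma bodyFalse_mono {I J : Set (Lit α)} (h : I ⊆ J) {B : Set (Lit α)}
    (hb : bodyFalse I B) : bodyFalse J B := by
  obtain ⟨l, hl, hc⟩ := hb; exact ⟨l, hl, h hc⟩

lemma unfounded_mono {I J : Set (Lit α)} (h : I ⊆ J) {U : Set α}
    (hU : unfounded P I U) : unfounded P J U := by
  intro r hr hh
  rcases hU r hr hh with hbf | hex
  · exact Or.inl (bodyFalse_mono h hbf)
  · exact Or.inr hex

lemma tp_mono {I J : Set (Lit α)} (h : I ⊆ J) : TP P I ⊆ TP P J := by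
  rintro a ⟨r, hr, he, hb⟩; exact ⟨r, hr, he, hb.trans h⟩

lemma gus_mono {I J : Set (Lit α)} (h : I ⊆ J) : GUS P I ⊆ GUS P J := by
  rintro a ⟨U, hU, haU⟩; exact ⟨U, unfounded_mono h hU, haU⟩

lemma wp_mono (P : Set (Rule α)) : Monotone (WP P) := fun _ _ h =>
  Set.union_subset_union (Set.image_mono (tp_mono h)) (Set.image_mono (gus_mono h))

/-- `W` is below every prefixed point of `WP P`. -/
lemma le_prefix (hW : isWFModel P W) {S : Set (Lit α)} (hS : WP P S ⊆ S) : W ⊆ S := by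
  set f : Set (Lit α) →o Set (Lit α) := ⟨WP P, wp_mono P⟩ with hf
  have h1 : W ⊆ OrderHom.lfp f := hW.2 _ f.map_lfp
  exact h1.trans (OrderHom.lfp_le f hS)

/-- Knaster–Tarski induction for the least fixed point `W`. -/
lemma kt_ind (hW : isWFModel P W) {S : Set (Lit α)} (h : WP P (W ∩ S) ⊆ S) : W ⊆ S := by
  have h2 : WP P (W ∩ S) ⊆ W ∩ S := by
    refine Set.subset_inter ?_ h
    have := wp_mono P (Set.inter_subset_left : W ∩ S ⊆ W)
    rwa [hW.1] at this
  exact (le_prefix hW h2).trans Set.inter_subset_right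

lemma mem_W_pos (hW : isWFModel P W) {a : α} : Lit.pos a ∈ W ↔ a ∈ TP P W := by
  conv_lhs => rw [← hW.1]
  simp [WP]

lemma mem_W_neg (hW : isWFModel P W) {a : α} : Lit.neg a ∈ W ↔ a ∈ GUS P W := by
  conv_lhs => rw [← hW.1]
  simp [WP]

/-- Induction principle on the positive part of `W`. -/
lemma ind (hW : isWFModel P W) {A : Set α}
    (h : ∀ r ∈ P, r.body ⊆ W → posBody r ⊆ A → r.head ∈ A) :
    ∀ a, Lit.pos a ∈ W → a ∈ A := by
  have hsub : W ⊆ {l | ∀ b, l = Lit.pos b → b ∈ A} := by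
    apply kt_ind hW
    intro l hl
    simp only [WP, Set.mem_union, Set.mem_image] at hl
    rcases hl with ⟨a, ha, rfl⟩ | ⟨a, ha, rfl⟩
    · intro b hb
      obtain rfl : a = b := by injection hb
      obtain ⟨r, hr, hhead, hbody⟩ := ha
      subst hhead
      exact h r hr (fun l' hl' => (hbody hl').1)
        (fun b' hb' => (hbody hb').2 b' rfl)
    · intro b hb
      cases hb
  intro a ha
  exact hsub ha a rfl

/-- Atoms with a true positive literal in `W` belong to no set that is
unfounded w.r.t. an interpretation disjoint from complements of `W`. -/
lemma lemC (hW : isWFModel P W) {I : Set (Lit α)} {U : Set α}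
    (hI : ∀ l ∈ I, l.compl ∉ W) (hU : unfounded P I U) :
    ∀ b, Lit.pos b ∈ W → b ∉ U := by
  apply ind hW (A := Uᶜ)
  intro r hr hbW hposA hhU
  rcases hU r hr hhU with ⟨l, hl, hc⟩ | ⟨b, hbU, hb⟩
  · have h2 := hI _ hc
    rw [compl_compl] at h2
    exact h2 (hbW hl)
  · exact hposA hb hbU

/-- The well-founded model is consistent. -/
lemma consis (hW : isWFModel P W) : ∀ l ∈ W, l.compl ∉ W := by
  have hsub : W ⊆ {l : Lit α | l.compl ∉ W} := by
    apply kt_ind hW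
    intro l hl
    simp only [WP, Set.mem_union, Set.mem_image] at hl
    rcases hl with ⟨a, ha, rfl⟩ | ⟨a, ha, rfl⟩
    · simp only [Set.mem_setOf_eq, Lit.compl]
      intro hna
      obtain ⟨U, hUunf, haU⟩ := (mem_W_neg hW).1 hna
      obtain ⟨r, hr, hhead, hbody⟩ := ha
      rcases hUunf r hr (by rwa [hhead]) with ⟨l', hl', hc'⟩ | ⟨b, hbU, hb⟩
      · exact (hbody hl').2 hc'
      · exact (hbody hb).2 ((mem_W_neg hW).2 ⟨U, hUunf, hbU⟩)
    · simp only [Set.mem_setOf_eq, Lit.compl]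
      intro hpa
      obtain ⟨U, hUunf, haU⟩ := ha
      exact lemC hW (fun l' hl' => hl'.2) hUunf a hpa haU
  exact fun l hl => hsub hl

/-- `W` is contained in every answer set of `P` (as literals). -/
lemma lemA (hW : isWFModel P W) {M : Set α} (hM : isAnswerSet P M) : W ⊆ litsOf M := by
  apply le_prefix hW
  intro l hl
  simp only [WP, Set.mem_union, Set.mem_image] at hl
  rcases hl with ⟨a, ha, rfl⟩ | ⟨a, ha, rfl⟩
  · obtain ⟨r, hr, hhead, hbody⟩ := ha
    apply mem_litsOf_pos.2
    rw [← hhead]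
    exact hM.1 r hr (fun b hb => mem_litsOf_neg.1 (hbody hb))
      (fun b hb => mem_litsOf_pos.1 (hbody hb))
  · obtain ⟨U, hUunf, haU⟩ := ha
    apply mem_litsOf_neg.2
    have hmod : modelsReduct P M (M \ U) := by
      intro r hr hneg hpos
      have hhM : r.head ∈ M := hM.1 r hr hneg (hpos.trans Set.diff_subset)
      refine ⟨hhM, fun hhU => ?_⟩
      rcases hUunf r hr hhU with ⟨l', hl', hc'⟩ | ⟨b, hbU, hb⟩
      · cases l' with
        | pos b => exact mem_litsOf_neg.1 hc' (hpos hl').1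
        | neg b => exact hneg b hl' (mem_litsOf_pos.1 hc')
      · exact (hpos hb).2 hbU
    intro haM
    have hss : M \ U ⊂ M :=
      Set.ssubset_iff_subset_ne.2 ⟨Set.diff_subset,
        fun h => ((Set.ext_iff.1 h a).2 haM).2 haU⟩
    exact hM.2 _ hss hmod

/-- `W` is contained in every answer set of the residual program. -/
lemma lemB (hW : isWFModel P W) {M : Set α}
    (hM : isAnswerSet (residualProg P W) M) : W ⊆ litsOf M := by
  have hcons := consis hW
  apply kt_ind hW
  intro l hl
  simp only [WP, Set.mem_union, Set.mem_image] at hl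
  rcases hl with ⟨a, ha, rfl⟩ | ⟨a, ha, rfl⟩
  · obtain ⟨r, hr, hhead, hbody⟩ := ha
    have hbW : r.body ⊆ W := fun l' hl' => (hbody hl').1
    have hnbf : ¬ bodyFalse W r.body := by
      rintro ⟨l', hl', hc'⟩
      exact hcons l' (hbW hl') hc'
    apply mem_litsOf_pos.2
    rw [← hhead]
    apply hM.1 ⟨r.head, {l' | l' ∈ r.body ∧ l' ∉ W}⟩ ⟨r, hr, hnbf, rfl⟩
    · intro b hb
      exact absurd (hbW hb.1) hb.2
    · intro b hb
      exact absurd (hbW hb.1) hb.2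
  · obtain ⟨U, hUunf, haU⟩ := ha
    apply mem_litsOf_neg.2
    have hmod : modelsReduct (residualProg P W) M (M \ U) := by
      rintro r' ⟨r, hr, hnbf, rfl⟩ hneg hpos
      have hhM : r.head ∈ M :=
        hM.1 ⟨r.head, {l | l ∈ r.body ∧ l ∉ W}⟩ ⟨r, hr, hnbf, rfl⟩ hneg
          (hpos.trans Set.diff_subset)
      refine ⟨hhM, fun hhU => ?_⟩
      rcases hUunf r hr hhU with hbf | ⟨b, hbU, hb⟩
      · exact hnbf (bodyFalse_mono Set.inter_subset_left hbf)
      · by_cases hbW : Lit.pos b ∈ W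
        · exact lemC hW (fun l' hl' => hcons l' hl'.1) hUunf b hbW hbU
        · exact (hpos ⟨hb, hbW⟩).2 hbU
    intro haM
    have hss : M \ U ⊂ M :=
      Set.ssubset_iff_subset_ne.2 ⟨Set.diff_subset,
        fun h => ((Set.ext_iff.1 h a).2 haM).2 haU⟩
    exact hM.2 _ hss hmod

end ASRproof

open ASRproof in
theorem answerSets_residual_eq {α : Type} (P : Set (Rule α)) (W : Set (Lit α))
    (hW : isWFModel P W) :
    ∀ M : Set α, isAnswerSet P M ↔ isAnswerSet (residualProg P W) M := by
  intro M
  constructor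
  · intro hM
    have hWM : W ⊆ litsOf M := lemA hW hM
    constructor
    · rintro r' ⟨r, hr, hnbf, rfl⟩ hneg hpos
      apply hM.1 r hr
      · intro b hb
        by_cases hbW : Lit.neg b ∈ W
        · exact mem_litsOf_neg.1 (hWM hbW)
        · exact hneg b ⟨hb, hbW⟩
      · intro b hb
        by_cases hbW : Lit.pos b ∈ W
        · exact mem_litsOf_pos.1 (hWM hbW)
        · exact hpos ⟨hb, hbW⟩
    · intro M' hM' hmod
      apply hM.2 M' hM'
      intro r hr hneg hpos
      have hnbf : ¬ bodyFalse W r.body := by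
        rintro ⟨l, hl, hc⟩
        cases l with
        | pos b => exact mem_litsOf_neg.1 (hWM hc) (hM'.subset (hpos hl))
        | neg b => exact hneg b hl (mem_litsOf_pos.1 (hWM hc))
      exact hmod ⟨r.head, {l | l ∈ r.body ∧ l ∉ W}⟩ ⟨r, hr, hnbf, rfl⟩
        (fun b hb => hneg b hb.1) (fun b hb => hpos hb.1)
  · intro hM
    have hWM : W ⊆ litsOf M := lemB hW hM
    have hcons := consis hW
    constructor
    · intro r hr hneg hpos
      have hnbf : ¬ bodyFalse W r.body := by
        rintro ⟨l, hl, hc⟩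
        cases l with
        | pos b => exact mem_litsOf_neg.1 (hWM hc) (hpos hl)
        | neg b => exact hneg b hl (mem_litsOf_pos.1 (hWM hc))
      exact hM.1 ⟨r.head, {l | l ∈ r.body ∧ l ∉ W}⟩ ⟨r, hr, hnbf, rfl⟩
        (fun b hb => hneg b hb.1) (fun b hb => hpos hb.1)
    · intro M' hM' hmod
      apply hM.2 M' hM'
      have hPos : ∀ b, Lit.pos b ∈ W → b ∈ M' := by
        apply ind hW
        intro r hr hbW hposA
        exact hmod r hr
          (fun b hb => mem_litsOf_neg.1 (hWM (hbW hb))) hposA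
      rintro r' ⟨r, hr, hnbf, rfl⟩ hneg hpos
      apply hmod r hr
      · intro b hb
        by_cases hbW : Lit.neg b ∈ W
        · exact mem_litsOf_neg.1 (hWM hbW)
        · exact hneg b ⟨hb, hbW⟩
      · intro b hb
        by_cases hbW : Lit.pos b ∈ W
        · exact hPos b hbW
        · exact hpos ⟨hb, hbW⟩
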